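/- For every natural number r ≥ 1, r^{1/4}·2^{-(r-1)/2}·√((r-1)!) ≤ Γ((r+1)/2) ≤ √(π/2)·r^{1/4}·2^{-(r-1)/2}·√((r-1)!). -/
import Mathlib

open Nat

lemma le_of_sq_le_sq'' {a b : ℝ} (ha : 0 ≤ a) (hb : 0 ≤ b) (h : a^2 ≤ b^2) : a ≤ b := by
  nlinarith

lemma gamma_mid_sq_le {a b : ℝ} (ha : 0 < a) (hb : 0 < b) :
    Real.Gamma ((a + b) / 2) ^ 2 ≤ Real.Gamma a * Real.Gamma b := by
  have h := Real.convexOn_log_Gamma.2 (Set.mem_Ioi.2 ha) (Set.mem_Ioi.2 hb)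
    (by norm_num : (0:ℝ) ≤ 1/2) (by norm_num : (0:ℝ) ≤ 1/2) (by norm_num)
  simp only [Function.comp, smul_eq_mul] at h
  have hm : (1/2 : ℝ) * a + (1/2 : ℝ) * b = (a + b) / 2 := by ring
  rw [hm] at h
  have hga := Real.Gamma_pos_of_pos ha
  have hgb := Real.Gamma_pos_of_pos hb
  have hgm := Real.Gamma_pos_of_pos (by linarith : (0:ℝ) < (a+b)/2)
  have := Real.exp_le_exp.2 (by linarith : 2 * Real.log (Real.Gamma ((a+b)/2)) ≤
      Real.log (Real.Gamma a) + Real.log (Real.Gamma b))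
  rw [Real.exp_add, Real.exp_log hga, Real.exp_log hgb, two_mul, Real.exp_add,
    Real.exp_log hgm] at this
  nlinarith [this, hgm]

set_option maxHeartbeats 1000000 in
theorem gamma_half_bounds (r : ℕ) (hr : 1 ≤ r) :
    (r : ℝ) ^ ((1 : ℝ) / 4) * (2 : ℝ) ^ (-(((r : ℝ) - 1) / 2)) * Real.sqrt ((r - 1)! : ℝ)
      ≤ Real.Gamma (((r : ℝ) + 1) / 2) ∧
    Real.Gamma (((r : ℝ) + 1) / 2)
      ≤ Real.sqrt (Real.pi / 2) * (r : ℝ) ^ ((1 : ℝ) / 4) * (2 : ℝ) ^ (-(((r : ℝ) - 1) / 2))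
          * Real.sqrt ((r - 1)! : ℝ) := by
  have hx1 : (1:ℝ) ≤ (r:ℝ) := by exact_mod_cast hr
  set x : ℝ := (r : ℝ) with hxdef
  have hx0 : (0:ℝ) < x := by linarith
  set F : ℝ := ((r - 1)! : ℝ) with hFdef
  have hF0 : 0 < F := by rw [hFdef]; positivity
  set G : ℝ := Real.Gamma ((x + 1) / 2) with hGdef
  set H : ℝ := Real.Gamma (x / 2) with hHdef
  have hG : 0 < G := Real.Gamma_pos_of_pos (by linarith)
  have hH : 0 < H := Real.Gamma_pos_of_pos (by linarith)
  set T : ℝ := (2:ℝ) ^ (-(x - 1)) with hTdef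
  have hT0 : 0 < T := Real.rpow_pos_of_pos two_pos _
  -- duplication formula
  have hfac : Real.Gamma x = F := by
    rw [hFdef, ← Real.Gamma_nat_eq_factorial (r - 1)]
    congr 1
    rw [hxdef]
    push_cast [Nat.cast_sub hr]
    ring
  have hGH : G * H = F * T * Real.sqrt Real.pi := by
    have h := Real.Gamma_mul_Gamma_add_half (x / 2)
    rw [show 2 * (x / 2) = x by ring, show x / 2 + 1 / 2 = (x + 1) / 2 by ring, hfac] at h
    rw [hGdef, hHdef, hTdef, show -(x - 1) = 1 - x by ring, mul_comm]
    exact h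
  -- log-convexity consequences
  have hu2 : G ^ 2 ≤ (x / 2) * H ^ 2 := by
    have h := gamma_mid_sq_le (by linarith : (0:ℝ) < x/2) (by linarith : (0:ℝ) < x/2 + 1)
    rw [show (x/2 + (x/2 + 1))/2 = (x+1)/2 by ring,
      Real.Gamma_add_one (by positivity : (x:ℝ)/2 ≠ 0)] at h
    rw [hGdef, hHdef]; linarith
  have hl2 : (x / 2) ^ 2 * H ^ 2 ≤ ((x + 1) / 2) * G ^ 2 := by
    have h := gamma_mid_sq_le (by linarith : (0:ℝ) < (x+1)/2)
      (by linarith : (0:ℝ) < (x+1)/2 + 1)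
    rw [show ((x+1)/2 + ((x+1)/2 + 1))/2 = x/2 + 1 by ring,
      Real.Gamma_add_one (by positivity : (x:ℝ)/2 ≠ 0),
      Real.Gamma_add_one (by positivity : ((x:ℝ)+1)/2 ≠ 0)] at h
    rw [hGdef, hHdef]; linarith
  have hsp : Real.sqrt Real.pi ^ 2 = Real.pi := Real.sq_sqrt Real.pi_pos.le
  have hpi := Real.pi_gt_three
  have hp2 : G ^ 2 * H ^ 2 = F ^ 2 * T ^ 2 * Real.pi := by
    have h : (G * H) ^ 2 = (F * T * Real.sqrt Real.pi) ^ 2 := by rw [hGH]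
    rw [mul_pow, mul_pow, mul_pow, hsp] at h
    exact h
  -- squares of rpow parts
  have hq2 : ((x : ℝ) ^ ((1:ℝ)/4)) ^ 2 = x ^ ((1:ℝ)/2) := by
    rw [← Real.rpow_natCast (x ^ ((1:ℝ)/4)) 2, ← Real.rpow_mul hx0.le]
    norm_num
  have hq0 : 0 < (x:ℝ) ^ ((1:ℝ)/4) := Real.rpow_pos_of_pos hx0 _
  have hh2 : ((2:ℝ) ^ (-((x - 1) / 2))) ^ 2 = T := by
    rw [hTdef, ← Real.rpow_natCast ((2:ℝ) ^ (-((x-1)/2))) 2,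
      ← Real.rpow_mul (by norm_num : (0:ℝ) ≤ 2)]
    norm_num
  have hh0 : 0 < (2:ℝ) ^ (-((x - 1) / 2)) := Real.rpow_pos_of_pos two_pos _
  have hsx2 : (x ^ ((1:ℝ)/2)) ^ 2 = x := by
    rw [← Real.rpow_natCast (x ^ ((1:ℝ)/2)) 2, ← Real.rpow_mul hx0.le]
    norm_num
  have hsf2 : Real.sqrt F ^ 2 = F := Real.sq_sqrt hF0.le
  have hsf0 : 0 ≤ Real.sqrt F := Real.sqrt_nonneg _
  constructor
  · -- lower bound
    rcases eq_or_lt_of_le hr with h1 | h2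
    · -- r = 1
      have hr1 : r = 1 := h1.symm
      subst hr1
      norm_num [hxdef, hFdef, hGdef, Real.Gamma_one]
    · have hx2 : (2:ℝ) ≤ x := by rw [hxdef]; exact_mod_cast h2
      apply le_of_sq_le_sq'' (by positivity) hG.le
      apply le_of_sq_le_sq'' (by positivity) (by positivity)
      have e1 : ((x ^ ((1:ℝ)/4) * (2:ℝ) ^ (-((x - 1) / 2)) * Real.sqrt F) ^ 2) ^ 2
          = x * (T ^ 2 * F ^ 2) := by
        have e2 : ((x ^ ((1:ℝ)/4) * (2:ℝ) ^ (-((x - 1) / 2)) * Real.sqrt F) ^ 2) ^ 2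
            = ((x ^ ((1:ℝ)/4)) ^ 2) ^ 2 * (((2:ℝ) ^ (-((x - 1) / 2))) ^ 2) ^ 2
              * (Real.sqrt F ^ 2) ^ 2 := by ring
        rw [e2, hq2, hsx2, hh2, hsf2]; ring
      rw [e1]
      have h1 := mul_le_mul_of_nonneg_right hl2 (sq_nonneg G)
      have hp2' : x ^ 2 * (G ^ 2 * H ^ 2) = x ^ 2 * (F ^ 2 * T ^ 2 * Real.pi) := by
        rw [hp2]
      have key : x ^ 2 * Real.pi * (T ^ 2 * F ^ 2) ≤ 2 * (x + 1) * (G ^ 2) ^ 2 := by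
        linarith [h1, hp2']
      have hq : (0:ℝ) ≤ Real.pi * x - 2 * x - 2 := by
        have h3 := mul_le_mul_of_nonneg_right hpi.le hx0.le
        linarith
      have hside := mul_nonneg (mul_nonneg hq hx0.le) (sq_nonneg (T * F))
      have h2x : (0:ℝ) < 2 * (x + 1) := by linarith
      have hfin : 2 * (x + 1) * (x * (T ^ 2 * F ^ 2)) ≤ 2 * (x + 1) * ((G ^ 2) ^ 2) := by
        linarith [key, hside]
      exact le_of_mul_le_mul_left hfin h2x
  · -- upper bound
    apply le_of_sq_le_sq'' hG.le (by positivity)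
    apply le_of_sq_le_sq'' (by positivity) (by positivity)
    have e1 : ((Real.sqrt (Real.pi / 2) * x ^ ((1:ℝ)/4) * (2:ℝ) ^ (-((x - 1) / 2))
        * Real.sqrt F) ^ 2) ^ 2 = (Real.pi / 2) ^ 2 * (x * (T ^ 2 * F ^ 2)) := by
      have e2 : ((Real.sqrt (Real.pi / 2) * x ^ ((1:ℝ)/4) * (2:ℝ) ^ (-((x - 1) / 2))
          * Real.sqrt F) ^ 2) ^ 2
          = (Real.sqrt (Real.pi / 2) ^ 2) ^ 2 * ((x ^ ((1:ℝ)/4)) ^ 2) ^ 2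
            * (((2:ℝ) ^ (-((x - 1) / 2))) ^ 2) ^ 2 * (Real.sqrt F ^ 2) ^ 2 := by ring
      rw [e2, hq2, hsx2, hh2, hsf2, Real.sq_sqrt (by positivity : (0:ℝ) ≤ Real.pi / 2)]
      ring
    rw [e1]
    have h1 := mul_le_mul_of_nonneg_right hu2 (sq_nonneg G)
    have hp2' : (x / 2) * (G ^ 2 * H ^ 2) = (x / 2) * (F ^ 2 * T ^ 2 * Real.pi) := by
      rw [hp2]
    have key : (G ^ 2) ^ 2 ≤ (x / 2) * Real.pi * (T ^ 2 * F ^ 2) := by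
      linarith [h1, hp2']
    have hside : (x / 2) * Real.pi * (T ^ 2 * F ^ 2)
        ≤ (Real.pi / 2) ^ 2 * (x * (T ^ 2 * F ^ 2)) := by
      have hq : (0:ℝ) ≤ Real.pi / 4 * (Real.pi - 2) :=
        mul_nonneg (by linarith) (by linarith)
      linarith [mul_nonneg (mul_nonneg hq hx0.le) (sq_nonneg (T * F))]
    linarith
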